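/- Let A ∈ ℝ^{L₁×L₂} and B ∈ ℝ^{L₂×L₃} with L₁ ≥ L₂. Then for any ε > 0 there exists C ∈ ℝ^{L₁×L₂} with Frobenius norm ‖C‖_F < ε such that the row space of (C+A)B equals the row space of B. -/
import Mathlib

open Matrix Finset

lemma mul_row_expand {m n p : Type*} [Fintype n] (P : Matrix m n ℝ) (Q : Matrix n p ℝ)
    (i : m) : (P * Q) i = ∑ k, P i k • Q k := by
  ext j
  simp [Matrix.mul_apply, Finset.sum_apply]

lemma row_span_eq_of_block_invertible (L₁ L₂ L₃ : ℕ) (h : L₂ ≤ L₁)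
    (M : Matrix (Fin L₁) (Fin L₂) ℝ) (B : Matrix (Fin L₂) (Fin L₃) ℝ)
    (hM : IsUnit (Matrix.det (Matrix.of fun i j => M (Fin.castLE h i) j))) :
    Submodule.span ℝ (Set.range fun i => (M * B) i) =
      Submodule.span ℝ (Set.range fun i => B i) := by
  set M' : Matrix (Fin L₂) (Fin L₂) ℝ := Matrix.of fun i j => M (Fin.castLE h i) j with hM'
  have hrow : ∀ i, (M' * B) i = (M * B) (Fin.castLE h i) := by
    intro i; ext j; simp [Matrix.mul_apply, hM']
  apply le_antisymm
  · rw [Submodule.span_le]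
    rintro _ ⟨i, rfl⟩
    show (M * B) i ∈ _
    rw [mul_row_expand]
    exact Submodule.sum_mem _ fun k _ =>
      Submodule.smul_mem _ _ (Submodule.subset_span ⟨k, rfl⟩)
  · rw [Submodule.span_le]
    rintro _ ⟨k, rfl⟩
    show B k ∈ _
    have hB : B = M'⁻¹ * (M' * B) := by
      rw [← Matrix.mul_assoc, Matrix.nonsing_inv_mul _ hM, Matrix.one_mul]
    have hk : B k = ∑ i, M'⁻¹ k i • (M * B) (Fin.castLE h i) := by
      conv_lhs => rw [hB]
      rw [mul_row_expand]
      simp [hrow]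
    rw [hk]
    exact Submodule.sum_mem _ fun i _ =>
      Submodule.smul_mem _ _ (Submodule.subset_span ⟨Fin.castLE h i, rfl⟩)

lemma eval_det_smul_one_add (n : ℕ) (A' : Matrix (Fin n) (Fin n) ℝ) (t : ℝ) :
    Polynomial.eval t (Matrix.charpoly (-A')) =
      Matrix.det (t • (1 : Matrix (Fin n) (Fin n) ℝ) + A') := by
  rw [Matrix.charpoly, ← Polynomial.coe_evalRingHom, RingHom.map_det]
  congr 1
  ext i j
  by_cases hij : i = j <;>
    simp [hij, charmatrix_apply_eq, charmatrix_apply_ne, Matrix.one_apply,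
      RingHom.mapMatrix_apply, sub_eq_add_neg]

/-- For A ∈ ℝ^{L₁×L₂}, B ∈ ℝ^{L₂×L₃} with L₁ ≥ L₂ and any ε > 0, there is a
matrix C with Frobenius norm < ε such that the row space of (C+A)B equals the
row space of B. -/
theorem exists_small_perturbation_row_space (L₁ L₂ L₃ : ℕ) (h : L₂ ≤ L₁)
    (A : Matrix (Fin L₁) (Fin L₂) ℝ) (B : Matrix (Fin L₂) (Fin L₃) ℝ)
    (ε : ℝ) (hε : 0 < ε) :
    ∃ C : Matrix (Fin L₁) (Fin L₂) ℝ,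
      Real.sqrt (∑ i, ∑ j, (C i j) ^ 2) < ε ∧
      Submodule.span ℝ (Set.range fun i => ((C + A) * B) i) =
        Submodule.span ℝ (Set.range fun i => B i) := by
  set A' : Matrix (Fin L₂) (Fin L₂) ℝ := Matrix.of fun i j => A (Fin.castLE h i) j with hA'
  set p : Polynomial ℝ := Matrix.charpoly (-A') with hp
  have hpne : p ≠ 0 := (Matrix.charpoly_monic (-A')).ne_zero
  have hper : ∀ t : ℝ, p.eval t = Matrix.det (t • (1 : Matrix (Fin L₂) (Fin L₂) ℝ) + A') :=
    fun t => eval_det_smul_one_add L₂ A' t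
  set δ : ℝ := ε / (Real.sqrt (L₁ * L₂) + 1) with hδ
  have hδpos : 0 < δ := div_pos hε (by positivity)
  have hfin : {t : ℝ | p.IsRoot t}.Finite := Polynomial.finite_setOf_isRoot hpne
  have hinf : (Set.Ioo (0:ℝ) δ).Infinite := Set.Ioo_infinite hδpos
  obtain ⟨t, ht⟩ := (hinf.diff hfin).nonempty
  obtain ⟨⟨ht0, htδ⟩, htroot⟩ := ht
  set J : Matrix (Fin L₁) (Fin L₂) ℝ :=
    Matrix.of (fun (i : Fin L₁) (j : Fin L₂) => if (i : ℕ) = (j : ℕ) then (1:ℝ) else 0) with hJ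
  refine ⟨t • J, ?_, ?_⟩
  · have hbound : (∑ i : Fin L₁, ∑ j : Fin L₂, ((t • J) i j) ^ 2)
        ≤ (L₁ * L₂ : ℝ) * t ^ 2 := by
      calc (∑ i : Fin L₁, ∑ j : Fin L₂, ((t • J) i j) ^ 2)
          ≤ ∑ _i : Fin L₁, ∑ _j : Fin L₂, t ^ 2 := by
            apply Finset.sum_le_sum; intro i _
            apply Finset.sum_le_sum; intro j _
            by_cases hij : (i : ℕ) = (j : ℕ) <;>
              simp [hJ, hij, sq_nonneg]
        _ = (L₁ * L₂ : ℝ) * t ^ 2 := by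
            simp [Finset.sum_const, mul_assoc]
    have hsq : Real.sqrt ((L₁ * L₂ : ℝ) * t ^ 2) = Real.sqrt (L₁ * L₂) * t := by
      rw [Real.sqrt_mul (by positivity), Real.sqrt_sq ht0.le]
    calc Real.sqrt (∑ i : Fin L₁, ∑ j : Fin L₂, ((t • J) i j) ^ 2)
        ≤ Real.sqrt ((L₁ * L₂ : ℝ) * t ^ 2) := Real.sqrt_le_sqrt hbound
      _ = Real.sqrt (L₁ * L₂) * t := hsq
      _ < (Real.sqrt (L₁ * L₂) + 1) * δ := by
          apply mul_lt_mul' (by linarith) htδ ht0.le (by positivity)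
      _ = ε := by
          rw [hδ]; field_simp
  · apply row_span_eq_of_block_invertible L₁ L₂ L₃ h
    have hblock : (Matrix.of fun i j => (t • J + A) (Fin.castLE h i) j)
        = t • (1 : Matrix (Fin L₂) (Fin L₂) ℝ) + A' := by
      ext i j
      by_cases hij : i = j <;>
        simp [hij, hJ, hA', Matrix.one_apply, Fin.val_eq_val]
    rw [hblock, ← hper]
    exact isUnit_iff_ne_zero.mpr htroot
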